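/- Let ρ > 0 and let c1, c2 be real numbers with 0 < c1 < c2 < 1. Define y : ℝ → ℝ by y(r) = 1/(1 + exp(-(c2 - c1) r)). Then lim_{t → ∞} ∫_{-t}^{t} ρ y(s)(1 - y(s)) · ( exp(-∫_s^t (1 - c1 - (c2 - c1) y(r)) dr) + ∫_s^t exp(-∫_s^r (1 - c1 - (c2 - c1) y(u)) du) dr )^{-1} ds = ρ (1 - c1)(1 - c2)/(c2 - c1)² · log((1 - c1)/(1 - c2)). -/

import Mathlib

open Filter MeasureTheory Set

namespace Stmt11Aux

noncomputable def brac (a b s t : ℝ) : ℝ :=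
  Real.exp (-(a*t)) + Real.exp (-(b*t))
    + (Real.exp (-(a*s)) - Real.exp (-(a*t)))/a + (Real.exp (-(b*s)) - Real.exp (-(b*t)))/b

noncomputable def FF (ρ a b β s t : ℝ) : ℝ :=
  ρ * Real.exp (-(b*s)) / ((1 + Real.exp (β*s)) * brac a b s t)

noncomputable def ff (ρ a b β s : ℝ) : ℝ :=
  ρ * Real.exp (-(b*s)) / ((1 + Real.exp (β*s)) * (Real.exp (-(a*s))/a + Real.exp (-(b*s))/b))

noncomputable def gg (ρ β s : ℝ) : ℝ := ρ * Real.exp (β*s) / (1 + Real.exp (β*s))^2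

noncomputable def Phi (ρ a b β s : ℝ) : ℝ :=
  ρ*a*b/β^2 * (Real.log (b + a*Real.exp (β*s)) - Real.log (1 + Real.exp (β*s)))

/-! ### closed form of the inner integral -/

lemma hasDeriv_G (a b β : ℝ) (hβ : β = a - b) (u : ℝ) :
    HasDerivAt (fun u => a*u - Real.log (1 + Real.exp (β*u)))
      (a - β * (1/(1 + Real.exp (-β*u)))) u := by
  have h1 : (0:ℝ) < 1 + Real.exp (β*u) := by positivity
  have h2 : HasDerivAt (fun u:ℝ => β*u) β u := by simpa using (hasDerivAt_id u).const_mul β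
  have h3 : HasDerivAt (fun u => Real.exp (β*u)) (Real.exp (β*u) * β) u := h2.exp
  have h4 : HasDerivAt (fun u => 1 + Real.exp (β*u)) (Real.exp (β*u) * β) u := h3.const_add 1
  have h5 := h4.log (ne_of_gt h1)
  have h6 : HasDerivAt (fun u:ℝ => a*u) a u := by simpa using (hasDerivAt_id u).const_mul a
  have h7 := h6.sub h5
  refine h7.congr_deriv ?_
  have he : Real.exp (-β*u) = (Real.exp (β*u))⁻¹ := by rw [← Real.exp_neg]; ring_nf
  rw [he]
  have hne : Real.exp (β*u) ≠ 0 := Real.exp_ne_zero _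
  field_simp
  ring

lemma cont_integrand (a β : ℝ) : Continuous (fun u : ℝ => a - β * (1/(1 + Real.exp (-β*u)))) := by
  apply continuous_const.sub
  apply continuous_const.mul
  exact continuous_const.div (by continuity) (fun x => by positivity)

lemma inner_integral (a b β : ℝ) (hβ : β = a - b) (s r : ℝ) :
    ∫ u in s..r, (a - β * (1/(1 + Real.exp (-β*u))))
      = (a*r - Real.log (1 + Real.exp (β*r))) - (a*s - Real.log (1 + Real.exp (β*s))) :=
  intervalIntegral.integral_eq_sub_of_hasDerivAt
    (fun u _ => hasDeriv_G a b β hβ u)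
    ((cont_integrand a β).intervalIntegrable _ _)

lemma exp_inner (a b β : ℝ) (hβ : β = a - b) (s r : ℝ) :
    Real.exp (-((a*r - Real.log (1 + Real.exp (β*r))) - (a*s - Real.log (1 + Real.exp (β*s)))))
      = (Real.exp (a*s) / (1 + Real.exp (β*s))) * (Real.exp (-(a*r)) + Real.exp (-(b*r))) := by
  have h1 : (0:ℝ) < 1 + Real.exp (β*r) := by positivity
  have h2 : (0:ℝ) < 1 + Real.exp (β*s) := by positivity
  rw [neg_sub, Real.exp_sub, Real.exp_sub, Real.exp_sub, Real.exp_log h1, Real.exp_log h2]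
  have key : Real.exp (β*r) * Real.exp (-(a*r)) = Real.exp (-(b*r)) := by
    rw [← Real.exp_add]; congr 1; rw [hβ]; ring
  have har : Real.exp (-(a*r)) = (Real.exp (a*r))⁻¹ := by rw [← Real.exp_neg]
  rw [div_div_div_comm]
  rw [mul_comm]
  congr 1
  rw [← key, har]
  have hne : Real.exp (a*r) ≠ 0 := Real.exp_ne_zero _
  field_simp

/-! ### the outer integral -/

lemma outer_integral (a b : ℝ) (ha : 0 < a) (hb : 0 < b) (C s t : ℝ) :
    ∫ r in s..t, C * (Real.exp (-(a*r)) + Real.exp (-(b*r)))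
      = C * ((Real.exp (-(a*s)) - Real.exp (-(a*t)))/a + (Real.exp (-(b*s)) - Real.exp (-(b*t)))/b) := by
  have key : ∀ r : ℝ, HasDerivAt (fun r => C * (-(Real.exp (-(a*r)))/a - Real.exp (-(b*r))/b))
      (C * (Real.exp (-(a*r)) + Real.exp (-(b*r)))) r := by
    intro r
    have h2 : HasDerivAt (fun r:ℝ => -(a*r)) (-a) r := by
      have := ((hasDerivAt_id r).const_mul a).neg; rw [mul_one] at this; exact this
    have h3 : HasDerivAt (fun r:ℝ => -(b*r)) (-b) r := by
      have := ((hasDerivAt_id r).const_mul b).neg; rw [mul_one] at this; exact this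
    have h4 : HasDerivAt (fun r => Real.exp (-(a*r))) (Real.exp (-(a*r)) * (-a)) r := h2.exp
    have h5 : HasDerivAt (fun r => Real.exp (-(b*r))) (Real.exp (-(b*r)) * (-b)) r := h3.exp
    have h6 := ((h4.neg.div_const a).sub (h5.div_const b)).const_mul C
    refine h6.congr_deriv ?_
    field_simp
    ring
  have hc : Continuous (fun r : ℝ => C * (Real.exp (-(a*r)) + Real.exp (-(b*r)))) := by
    apply continuous_const.mul
    exact (Real.continuous_exp.comp (by continuity)).add (Real.continuous_exp.comp (by continuity))
  rw [intervalIntegral.integral_eq_sub_of_hasDerivAt (fun r _ => key r) (hc.intervalIntegrable _ _)]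
  ring

lemma brac_ge (a b s t : ℝ) (ha : 0 < a) (ha1 : a < 1) (hb : 0 < b) (hb1 : b < 1)
    (hst : s ≤ t) : Real.exp (-(a*s)) + Real.exp (-(b*s)) ≤ brac a b s t := by
  unfold brac
  have h1 : Real.exp (-(a*t)) ≤ Real.exp (-(a*s)) :=
    Real.exp_le_exp.2 (by nlinarith)
  have h2 : Real.exp (-(b*t)) ≤ Real.exp (-(b*s)) :=
    Real.exp_le_exp.2 (by nlinarith)
  have h3 : Real.exp (-(a*s)) - Real.exp (-(a*t)) ≤ (Real.exp (-(a*s)) - Real.exp (-(a*t)))/a := by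
    rw [le_div_iff₀ ha]; nlinarith
  have h4 : Real.exp (-(b*s)) - Real.exp (-(b*t)) ≤ (Real.exp (-(b*s)) - Real.exp (-(b*t)))/b := by
    rw [le_div_iff₀ hb]; nlinarith
  nlinarith

lemma brac_pos (a b s t : ℝ) (ha : 0 < a) (ha1 : a < 1) (hb : 0 < b) (hb1 : b < 1)
    (hst : s ≤ t) : 0 < brac a b s t :=
  lt_of_lt_of_le (by positivity) (brac_ge a b s t ha ha1 hb hb1 hst)

/-! ### bounds -/

lemma div_le_gg (ρ a b β s D : ℝ) (hρ : 0 < ρ) (hβ : β = a - b)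
    (hD : Real.exp (-(a*s)) + Real.exp (-(b*s)) ≤ D) :
    ρ * Real.exp (-(b*s)) / ((1 + Real.exp (β*s)) * D) ≤ gg ρ β s := by
  have hsum : Real.exp (-(a*s)) + Real.exp (-(b*s)) = Real.exp (-(a*s)) * (1 + Real.exp (β*s)) := by
    rw [mul_add, mul_one, ← Real.exp_add]
    congr 2
    rw [hβ]; ring
  have hP : (0:ℝ) < 1 + Real.exp (β*s) := by positivity
  have hD0 : 0 < D := lt_of_lt_of_le (by positivity) hD
  have step : ρ * Real.exp (-(b*s)) / ((1 + Real.exp (β*s)) * D)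
      ≤ ρ * Real.exp (-(b*s)) / ((1 + Real.exp (β*s)) * (Real.exp (-(a*s)) + Real.exp (-(b*s)))) := by
    apply div_le_div_of_nonneg_left (by positivity) (by positivity)
    exact mul_le_mul_of_nonneg_left hD (le_of_lt hP)
  refine le_trans step (le_of_eq ?_)
  rw [hsum]
  unfold gg
  have key : Real.exp (-(b*s)) = Real.exp (β*s) * Real.exp (-(a*s)) := by
    rw [← Real.exp_add]; congr 1; rw [hβ]; ring
  rw [key]
  have h1 : Real.exp (-(a*s)) ≠ 0 := Real.exp_ne_zero _
  field_simp

lemma ff_le_gg (ρ a b β s : ℝ) (hρ : 0 < ρ) (hβ : β = a - b)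
    (ha : 0 < a) (ha1 : a < 1) (hb : 0 < b) (hb1 : b < 1) : ff ρ a b β s ≤ gg ρ β s := by
  apply div_le_gg ρ a b β s _ hρ hβ
  have h3 : Real.exp (-(a*s)) ≤ Real.exp (-(a*s))/a := by
    rw [le_div_iff₀ ha]; nlinarith [Real.exp_pos (-(a*s))]
  have h4 : Real.exp (-(b*s)) ≤ Real.exp (-(b*s))/b := by
    rw [le_div_iff₀ hb]; nlinarith [Real.exp_pos (-(b*s))]
  linarith

lemma ff_nonneg (ρ a b β s : ℝ) (hρ : 0 < ρ) (ha : 0 < a) (hb : 0 < b) : 0 ≤ ff ρ a b β s := by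
  unfold ff; positivity

lemma gg_nonneg (ρ β s : ℝ) (hρ : 0 < ρ) : 0 ≤ gg ρ β s := by unfold gg; positivity

/-! ### integrability of the dominating function -/

lemma gg_cont (ρ β : ℝ) : Continuous (gg ρ β) := by
  unfold gg
  exact (continuous_const.mul (Real.continuous_exp.comp (by continuity))).div
    (by continuity) (fun s => by positivity)

lemma gg_even (ρ β s : ℝ) : gg ρ β (-s) = gg ρ β s := by
  unfold gg
  have h1 : Real.exp (β*(-s)) = (Real.exp (β*s))⁻¹ := by rw [← Real.exp_neg]; ring_nf
  rw [h1]
  have h2 : Real.exp (β*s) ≠ 0 := Real.exp_ne_zero _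
  field_simp
  ring

lemma gg_integrableOn_Ioi (ρ β : ℝ) (hρ : 0 < ρ) (hβ : 0 < β) :
    IntegrableOn (gg ρ β) (Ioi (0:ℝ)) := by
  have hb : IntegrableOn (fun s => ρ * Real.exp (-β*s)) (Ioi (0:ℝ)) :=
    (exp_neg_integrableOn_Ioi 0 hβ).const_mul ρ
  apply hb.mono' ((gg_cont ρ β).aestronglyMeasurable.restrict)
  filter_upwards [] with s
  have h0 : (0:ℝ) ≤ gg ρ β s := by unfold gg; positivity
  rw [Real.norm_eq_abs, abs_of_nonneg h0]
  unfold gg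
  rw [div_le_iff₀ (by positivity)]
  have hinvE : Real.exp (-β*s) * Real.exp (β*s) = 1 := by
    rw [← Real.exp_add]; ring_nf; exact Real.exp_zero
  have hE2 : Real.exp (-β*s) * Real.exp (β*s)^2 = Real.exp (β*s) := by
    rw [sq, ← mul_assoc, hinvE, one_mul]
  have k1 : ρ * (Real.exp (-β*s) * Real.exp (β*s)^2) = ρ * Real.exp (β*s) := by rw [hE2]
  have k2 : ρ * (Real.exp (-β*s) * Real.exp (β*s)) = ρ := by rw [hinvE, mul_one]
  nlinarith [k1, k2, mul_pos hρ (Real.exp_pos (-β*s))]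

lemma gg_integrable (ρ β : ℝ) (hρ : 0 < ρ) (hβ : 0 < β) : Integrable (gg ρ β) := by
  have h1 : IntegrableOn (gg ρ β) (Ioi (0:ℝ)) := gg_integrableOn_Ioi ρ β hρ hβ
  have h2 : IntegrableOn (gg ρ β) (Iio (0:ℝ)) := by
    have h3 := (MeasurePreserving.integrableOn_comp_preimage
      (Measure.measurePreserving_neg (volume : Measure ℝ))
      (Homeomorph.neg ℝ).measurableEmbedding).2 h1
    have h4 : (Neg.neg ⁻¹' Ioi (0:ℝ)) = Iio (0:ℝ) := by ext x; simp
    rw [h4] at h3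
    apply h3.congr_fun _ measurableSet_Iio
    intro x _
    simp only [Function.comp_apply]
    exact gg_even ρ β x
  have h5 : IntegrableOn (gg ρ β) (Ici (0:ℝ)) := by
    rwa [integrableOn_Ici_iff_integrableOn_Ioi]
  have := h2.union h5
  rwa [Iio_union_Ici, integrableOn_univ] at this

/-! ### explicit integral of the limit function -/

lemma ff_eq (ρ a b β s : ℝ) (ha : 0 < a) (hb : 0 < b) (hβ : β = a - b) :
    ff ρ a b β s = ρ*a*b*Real.exp (β*s) / ((1 + Real.exp (β*s)) * (b + a*Real.exp (β*s))) := by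
  unfold ff
  have key : Real.exp (-(b*s)) = Real.exp (β*s) * Real.exp (-(a*s)) := by
    rw [← Real.exp_add]; congr 1; rw [hβ]; ring
  rw [key]
  have h1 : Real.exp (-(a*s)) ≠ 0 := Real.exp_ne_zero _
  have h2 : (0:ℝ) < 1 + Real.exp (β*s) := by positivity
  field_simp

lemma Phi_hasDeriv (ρ a b β s : ℝ) (ha : 0 < a) (hb : 0 < b) (hβ : β = a - b) (hβ0 : 0 < β) :
    HasDerivAt (Phi ρ a b β) (ff ρ a b β s) s := by
  have h1 : (0:ℝ) < b + a*Real.exp (β*s) := by positivity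
  have h2 : (0:ℝ) < 1 + Real.exp (β*s) := by positivity
  have hlin : HasDerivAt (fun s:ℝ => β*s) β s := by simpa using (hasDerivAt_id s).const_mul β
  have hexp : HasDerivAt (fun s => Real.exp (β*s)) (Real.exp (β*s) * β) s := hlin.exp
  have h3 : HasDerivAt (fun s => b + a*Real.exp (β*s)) (a*(Real.exp (β*s) * β)) s :=
    (hexp.const_mul a).const_add b
  have h4 : HasDerivAt (fun s => (1:ℝ) + Real.exp (β*s)) (Real.exp (β*s) * β) s := hexp.const_add 1
  have h5 := ((h3.log (ne_of_gt h1)).sub (h4.log (ne_of_gt h2))).const_mul (ρ*a*b/β^2)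
  refine h5.congr_deriv ?_
  rw [ff_eq ρ a b β s ha hb hβ]
  have hβne : β ≠ 0 := ne_of_gt hβ0
  subst hβ
  field_simp
  ring

lemma ff_cont (ρ a b β : ℝ) (ha : 0 < a) (hb : 0 < b) : Continuous (ff ρ a b β) := by
  unfold ff
  apply Continuous.div
  · exact continuous_const.mul (Real.continuous_exp.comp (by continuity))
  · apply Continuous.mul (by continuity)
    exact ((Real.continuous_exp.comp (by continuity)).div_const a).add
      ((Real.continuous_exp.comp (by continuity)).div_const b)
  · intro s
    have h1 : (0:ℝ) < 1 + Real.exp (β*s) := by positivity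
    have h2 : (0:ℝ) < Real.exp (-(a*s))/a + Real.exp (-(b*s))/b := by positivity
    positivity

lemma intervalIntegral_ff (ρ a b β t : ℝ) (ha : 0 < a) (hb : 0 < b) (hβ : β = a - b)
    (hβ0 : 0 < β) :
    ∫ s in (-t)..t, ff ρ a b β s = Phi ρ a b β t - Phi ρ a b β (-t) :=
  intervalIntegral.integral_eq_sub_of_hasDerivAt
    (fun s _ => Phi_hasDeriv ρ a b β s ha hb hβ hβ0)
    ((ff_cont ρ a b β ha hb).intervalIntegrable _ _)

lemma exp_neg_tendsto (β : ℝ) (hβ0 : 0 < β) :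
    Tendsto (fun t : ℝ => Real.exp (-β*t)) atTop (nhds 0) := by
  apply Real.tendsto_exp_atBot.comp
  have h1 : Tendsto (fun t : ℝ => β*t) atTop atTop :=
    Tendsto.const_mul_atTop hβ0 tendsto_id
  have := tendsto_neg_atTop_atBot.comp h1
  apply this.congr
  intro t
  simp [neg_mul]

lemma exp_neg_tendsto' (c : ℝ) (hc : 0 < c) :
    Tendsto (fun t : ℝ => Real.exp (-(c*t))) atTop (nhds 0) := by
  apply (exp_neg_tendsto c hc).congr
  intro t; ring_nf

lemma tendsto_Phi_atTop (ρ a b β : ℝ) (ha : 0 < a) (hb : 0 < b) (hβ0 : 0 < β) :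
    Tendsto (fun t => Phi ρ a b β t) atTop (nhds (ρ*a*b/β^2 * Real.log a)) := by
  have hid : ∀ t : ℝ, Phi ρ a b β t
      = ρ*a*b/β^2 * (Real.log (b*Real.exp (-β*t) + a) - Real.log (Real.exp (-β*t) + 1)) := by
    intro t
    unfold Phi
    congr 1
    have hx : Real.exp (β*t) * Real.exp (-β*t) = 1 := by
      rw [← Real.exp_add]; ring_nf; exact Real.exp_zero
    have e1 : b + a*Real.exp (β*t) = Real.exp (β*t) * (b*Real.exp (-β*t) + a) := by
      linear_combination (-b) * hx
    have e2 : 1 + Real.exp (β*t) = Real.exp (β*t) * (Real.exp (-β*t) + 1) := by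
      linear_combination (-1 : ℝ) * hx
    rw [e1, e2, Real.log_mul (Real.exp_ne_zero _) (by positivity),
      Real.log_mul (Real.exp_ne_zero _) (by positivity)]
    ring
  have h1 : Tendsto (fun t : ℝ => b*Real.exp (-β*t) + a) atTop (nhds a) := by
    have := ((exp_neg_tendsto β hβ0).const_mul b).add_const a
    simpa using this
  have h2 : Tendsto (fun t : ℝ => Real.exp (-β*t) + 1) atTop (nhds 1) := by
    have := (exp_neg_tendsto β hβ0).add_const 1
    simpa using this
  have hl1 : Tendsto (fun t : ℝ => Real.log (b*Real.exp (-β*t) + a)) atTop (nhds (Real.log a)) :=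
    ((Real.continuousAt_log (ne_of_gt ha)).tendsto.comp h1)
  have hl2 : Tendsto (fun t : ℝ => Real.log (Real.exp (-β*t) + 1)) atTop (nhds 0) := by
    have := ((Real.continuousAt_log (ne_of_gt one_pos)).tendsto.comp h2)
    simpa [Function.comp_def] using this
  have := ((hl1.sub hl2).const_mul (ρ*a*b/β^2))
  rw [sub_zero] at this
  exact Tendsto.congr (fun t => (hid t).symm) this

lemma tendsto_Phi_atBot (ρ a b β : ℝ) (hb : 0 < b) (hβ0 : 0 < β) :
    Tendsto (fun t => Phi ρ a b β (-t)) atTop (nhds (ρ*a*b/β^2 * Real.log b)) := by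
  have hexp : Tendsto (fun t : ℝ => Real.exp (β*(-t))) atTop (nhds 0) := by
    apply (exp_neg_tendsto β hβ0).congr
    intro t; ring_nf
  have h1 : Tendsto (fun t : ℝ => b + a*Real.exp (β*(-t))) atTop (nhds b) := by
    have := (hexp.const_mul a).const_add b
    simpa using this
  have h2 : Tendsto (fun t : ℝ => 1 + Real.exp (β*(-t))) atTop (nhds 1) := by
    have := hexp.const_add 1
    simpa using this
  have hl1 : Tendsto (fun t : ℝ => Real.log (b + a*Real.exp (β*(-t)))) atTop (nhds (Real.log b)) :=
    ((Real.continuousAt_log (ne_of_gt hb)).tendsto.comp h1)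
  have hl2 : Tendsto (fun t : ℝ => Real.log (1 + Real.exp (β*(-t)))) atTop (nhds 0) := by
    have := ((Real.continuousAt_log (ne_of_gt one_pos)).tendsto.comp h2)
    simpa [Function.comp_def] using this
  have := ((hl1.sub hl2).const_mul (ρ*a*b/β^2))
  rw [sub_zero] at this
  exact this

lemma tendsto_intervalIntegral_ff (ρ a b β : ℝ) (ha : 0 < a) (hb : 0 < b) (hβ : β = a - b)
    (hβ0 : 0 < β) :
    Tendsto (fun t => ∫ s in (-t)..t, ff ρ a b β s) atTop
      (nhds (ρ*a*b/β^2 * (Real.log a - Real.log b))) := by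
  have h := (tendsto_Phi_atTop ρ a b β ha hb hβ0).sub (tendsto_Phi_atBot ρ a b β hb hβ0)
  rw [← mul_sub] at h
  exact Tendsto.congr (fun t => (intervalIntegral_ff ρ a b β t ha hb hβ hβ0).symm) h

/-! ### pointwise limit -/

lemma tendsto_brac (a b s : ℝ) (ha : 0 < a) (hb : 0 < b) :
    Tendsto (fun t => brac a b s t) atTop
      (nhds (Real.exp (-(a*s))/a + Real.exp (-(b*s))/b)) := by
  have h1 := exp_neg_tendsto' a ha
  have h2 := exp_neg_tendsto' b hb
  have h3 := ((h1.add h2).add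
      (((tendsto_const_nhds (x := Real.exp (-(a*s)))).sub h1).div_const a)).add
      (((tendsto_const_nhds (x := Real.exp (-(b*s)))).sub h2).div_const b)
  have : (0:ℝ) + 0 + (Real.exp (-(a*s)) - 0)/a + (Real.exp (-(b*s)) - 0)/b
      = Real.exp (-(a*s))/a + Real.exp (-(b*s))/b := by ring
  rw [this] at h3
  exact h3

lemma tendsto_FF (ρ a b β s : ℝ) (ha : 0 < a) (hb : 0 < b) :
    Tendsto (fun t => FF ρ a b β s t) atTop (nhds (ff ρ a b β s)) := by
  have hP : (0:ℝ) < 1 + Real.exp (β*s) := by positivity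
  have hD : (0:ℝ) < Real.exp (-(a*s))/a + Real.exp (-(b*s))/b := by positivity
  have hden : Tendsto (fun t => (1 + Real.exp (β*s)) * brac a b s t) atTop
      (nhds ((1 + Real.exp (β*s)) * (Real.exp (-(a*s))/a + Real.exp (-(b*s))/b))) :=
    (tendsto_brac a b s ha hb).const_mul _
  exact (tendsto_const_nhds.div hden (by positivity))

lemma FF_meas (ρ a b β t : ℝ) : Measurable (fun s => FF ρ a b β s t) := by
  unfold FF brac
  apply Measurable.div
  · fun_prop
  · fun_prop

/-! ### the integrand identity -/

lemma denom_eq (a b β : ℝ) (ha : 0 < a) (hb : 0 < b) (hβ : β = a - b) (s t : ℝ) :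
    Real.exp (-((a*t - Real.log (1 + Real.exp (β*t))) - (a*s - Real.log (1 + Real.exp (β*s)))))
      + (∫ r in s..t, Real.exp (-((a*r - Real.log (1 + Real.exp (β*r))) - (a*s - Real.log (1 + Real.exp (β*s))))))
      = (Real.exp (a*s) / (1 + Real.exp (β*s))) * brac a b s t := by
  simp only [exp_inner a b β hβ s]
  rw [outer_integral a b ha hb]
  unfold brac
  ring

lemma main_eq (ρ a b β s t : ℝ) (hρ : 0 < ρ) (ha : 0 < a) (ha1 : a < 1) (hb : 0 < b)
    (hb1 : b < 1) (hβ : β = a - b) (hB : 0 < brac a b s t) :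
    ρ * (1/(1 + Real.exp (-β*s))) * (1 - 1/(1 + Real.exp (-β*s))) *
      ((Real.exp (a*s) / (1 + Real.exp (β*s))) * brac a b s t)⁻¹
      = FF ρ a b β s t := by
  unfold FF
  have hE1 : Real.exp (-β*s) = (Real.exp (β*s))⁻¹ := by rw [← Real.exp_neg]; ring_nf
  have hEb : Real.exp (-(b*s)) * Real.exp (a*s) = Real.exp (β*s) := by
    rw [← Real.exp_add]; congr 1; rw [hβ]; ring
  have hP : (0:ℝ) < 1 + Real.exp (β*s) := by positivity
  have hA : (0:ℝ) < Real.exp (a*s) := Real.exp_pos _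
  have hE : (0:ℝ) < Real.exp (β*s) := Real.exp_pos _
  rw [hE1]
  have h1 : (1:ℝ) + (Real.exp (β*s))⁻¹ ≠ 0 := by positivity
  field_simp
  have hEb' : Real.exp (s*a) * Real.exp (-(s*b)) = Real.exp (β*s) := by
    rw [mul_comm s a, mul_comm s b, mul_comm]; exact hEb
  linear_combination (-(1 + Real.exp (β*s))^2) * hEb'

end Stmt11Aux

open Stmt11Aux


/-- The analytic core of the survival probability of the non-homogeneous branching
process with immigration: with `y(r) = 1/(1 + e^{-(c2-c1)r})`,
`∫_{-t}^{t} ρ y(s)(1-y(s)) (exp(-∫_s^t(1-c1-(c2-c1)y)) + ∫_s^t exp(-∫_s^r(1-c1-(c2-c1)y)) dr)⁻¹ ds`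
converges as `t → ∞` to `ρ(1-c1)(1-c2)/(c2-c1)² · log((1-c1)/(1-c2))`. -/
theorem stmt_11 (ρ c1 c2 : ℝ) (hρ : 0 < ρ) (h0 : 0 < c1) (h12 : c1 < c2) (h2 : c2 < 1) :
    let y : ℝ → ℝ := fun r => 1 / (1 + Real.exp (-(c2 - c1) * r))
    Tendsto (fun t : ℝ =>
        ∫ s in (-t)..t, ρ * y s * (1 - y s) *
          (Real.exp (-(∫ r in s..t, (1 - c1 - (c2 - c1) * y r)))
            + ∫ r in s..t, Real.exp (-(∫ u in s..r, (1 - c1 - (c2 - c1) * y u))))⁻¹)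
      atTop
      (nhds (ρ * (1 - c1) * (1 - c2) / (c2 - c1) ^ 2 * Real.log ((1 - c1) / (1 - c2)))) := by
  intro y
  have ha : 0 < 1 - c1 := by linarith
  have ha1 : 1 - c1 < 1 := by linarith
  have hb : 0 < 1 - c2 := by linarith
  have hb1 : 1 - c2 < 1 := by linarith
  have hβ0 : 0 < c2 - c1 := by linarith
  have hβ : c2 - c1 = (1 - c1) - (1 - c2) := by ring
  -- Step A : for t ≥ 0 the integral is the integral of the indicator version of FF
  have stepA : ∀ t : ℝ, 0 ≤ t →
      (∫ s in (-t)..t, ρ * y s * (1 - y s) *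
          (Real.exp (-(∫ r in s..t, (1 - c1 - (c2 - c1) * y r)))
            + ∫ r in s..t, Real.exp (-(∫ u in s..r, (1 - c1 - (c2 - c1) * y u))))⁻¹)
        = ∫ s, (Set.Ioc (-t) t).indicator
            (fun s => FF ρ (1 - c1) (1 - c2) (c2 - c1) s t) s := by
    intro t ht
    have hmt : -t ≤ t := by linarith
    rw [MeasureTheory.integral_indicator measurableSet_Ioc,
      ← intervalIntegral.integral_of_le hmt]
    apply intervalIntegral.integral_congr
    intro s hs
    rw [Set.uIcc_of_le hmt] at hs
    have hst : s ≤ t := hs.2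
    simp only [y]
    simp only [inner_integral (1 - c1) (1 - c2) (c2 - c1) hβ]
    rw [denom_eq (1 - c1) (1 - c2) (c2 - c1) ha hb hβ]
    exact main_eq ρ (1 - c1) (1 - c2) (c2 - c1) s t hρ ha ha1 hb hb1 hβ
      (brac_pos _ _ _ _ ha ha1 hb hb1 hst)
  -- Step B : dominated convergence
  have stepB : Tendsto (fun t : ℝ => ∫ s, (Set.Ioc (-t) t).indicator
        (fun s => FF ρ (1 - c1) (1 - c2) (c2 - c1) s t) s) atTop
      (nhds (∫ s, ff ρ (1 - c1) (1 - c2) (c2 - c1) s)) := by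
    apply MeasureTheory.tendsto_integral_filter_of_dominated_convergence
      (gg ρ (c2 - c1))
    · filter_upwards [] with t
      exact ((FF_meas ρ (1 - c1) (1 - c2) (c2 - c1) t).indicator
        measurableSet_Ioc).aestronglyMeasurable
    · filter_upwards [eventually_ge_atTop (0:ℝ)] with t ht
      filter_upwards [] with s
      by_cases hs : s ∈ Set.Ioc (-t) t
      · rw [Set.indicator_of_mem hs]
        have hst : s ≤ t := hs.2
        have hBpos := brac_pos (1 - c1) (1 - c2) s t ha ha1 hb hb1 hst
        have hFFnn : 0 ≤ FF ρ (1 - c1) (1 - c2) (c2 - c1) s t := by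
          unfold FF
          positivity
        rw [Real.norm_eq_abs, abs_of_nonneg hFFnn]
        exact div_le_gg ρ (1 - c1) (1 - c2) (c2 - c1) s _ hρ hβ
          (brac_ge _ _ _ _ ha ha1 hb hb1 hst)
      · rw [Set.indicator_of_notMem hs]
        simpa using gg_nonneg ρ (c2 - c1) s hρ
    · exact gg_integrable ρ (c2 - c1) hρ hβ0
    · filter_upwards [] with s
      apply (tendsto_FF ρ (1 - c1) (1 - c2) (c2 - c1) s ha hb).congr'
      filter_upwards [eventually_ge_atTop (|s| + 1)] with t ht
      have h1 : -t < s := by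
        have := neg_abs_le s
        linarith
      have h2 : s ≤ t := by
        have := le_abs_self s
        linarith
      rw [Set.indicator_of_mem (Set.mem_Ioc.2 ⟨h1, h2⟩)]
  -- Step C : value of the limit integral
  have hval : (∫ s, ff ρ (1 - c1) (1 - c2) (c2 - c1) s)
      = ρ * (1 - c1) * (1 - c2) / (c2 - c1) ^ 2 * Real.log ((1 - c1) / (1 - c2)) := by
    have hint : Integrable (ff ρ (1 - c1) (1 - c2) (c2 - c1)) := by
      apply (gg_integrable ρ (c2 - c1) hρ hβ0).mono'
        (ff_cont ρ (1 - c1) (1 - c2) (c2 - c1) ha hb).aestronglyMeasurable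
      filter_upwards [] with s
      rw [Real.norm_eq_abs, abs_of_nonneg (ff_nonneg _ _ _ _ _ hρ ha hb)]
      exact ff_le_gg ρ (1 - c1) (1 - c2) (c2 - c1) s hρ hβ ha ha1 hb hb1
    have h1 := MeasureTheory.intervalIntegral_tendsto_integral hint
      tendsto_neg_atTop_atBot (tendsto_id (α := ℝ))
    have h2 := tendsto_intervalIntegral_ff ρ (1 - c1) (1 - c2) (c2 - c1) ha hb hβ hβ0
    have h3 := tendsto_nhds_unique h1 h2
    rw [h3, Real.log_div ha.ne' hb.ne']
  rw [hval] at stepB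
  apply stepB.congr'
  filter_upwards [eventually_ge_atTop (0:ℝ)] with t ht
  exact (stepA t ht).symm
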